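/- Let (T̂, {B_x}) be the cut decomposition of a digraph H rooted at s, and let y be a node of T̂ such that the path from s to y in T̂ contains at least ℓ nodes whose diblocks are non-degenerate (i.e., have at least 3 vertices). Then H contains an out-tree rooted at s with at least ℓ leaves. -/

import Mathlib

namespace CutPaper

variable {V : Type*}

/-- A directed path in the digraph `A`, given as a nonempty list of distinct
vertices from `u` to `v` with consecutive vertices joined by arcs. -/
def IsPath (A : V → V → Prop) (p : List V) (u v : V) : Prop :=
  p.Chain' A ∧ p.head? = some u ∧ p.getLast? = some v ∧ p.Nodup

/-- `v` is reachable from `u` in the digraph `A`. -/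
def Reaches (A : V → V → Prop) (u v : V) : Prop := ∃ p, IsPath A p u v

/-- Two paths from `r` to `v` are internally disjoint: they share only `r` and `v`. -/
def IntDisj (p q : List V) (r v : V) : Prop :=
  ∀ x, x ∈ p → x ∈ q → x = r ∨ x = v

/-- `v` is bi-reachable from `r`: there are two (distinct) internally
vertex-disjoint paths from `r` to `v`. -/
def BiReachable (A : V → V → Prop) (r v : V) : Prop :=
  ∃ p q, p ≠ q ∧ IsPath A p r v ∧ IsPath A q r v ∧ IntDisj p q r v

/-- The diblock of `r`: bi-reachable vertices together with `r` and its out-neighbours. -/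
def diblock (A : V → V → Prop) (r : V) : Set V :=
  {v | BiReachable A r v} ∪ {r} ∪ {v | A r v}

/-- The subdigraph of `A` induced on a vertex set `S`. -/
def Asub (A : V → V → Prop) (S : Set V) : V → V → Prop :=
  fun u v => A u v ∧ u ∈ S ∧ v ∈ S

/-- The path `p` meets the set `B` for the last time in `x`. -/
def LastTouch (B : Set V) (p : List V) (x : V) : Prop :=
  ∃ p₁ p₂, p = p₁ ++ x :: p₂ ∧ x ∈ B ∧ ∀ y ∈ p₂, y ∉ B

/-- `T` is an out-tree with vertex set `S` and root `r`, as a subdigraph of `A`. -/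
structure IsOutTree (A T : V → V → Prop) (S : Set V) (r : V) : Prop where
  sub : ∀ u v, T u v → A u v
  mem : ∀ u v, T u v → u ∈ S ∧ v ∈ S
  root_mem : r ∈ S
  no_in_root : ∀ u, ¬ T u r
  unique_in : ∀ v ∈ S, v ≠ r → ∃! u, T u v
  reach : ∀ v ∈ S, Reaches T r v

/-- `T` is an in-tree with vertex set `S` and root `r`, as a subdigraph of `A`. -/
def IsInTree (A T : V → V → Prop) (S : Set V) (r : V) : Prop :=
  IsOutTree (fun u v => A v u) (fun u v => T v u) S r

/-- The leaves (vertices of out-degree zero) of an out-tree `T` on vertex set `S`. -/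
def leaves (T : V → V → Prop) (S : Set V) : Set V :=
  {v | v ∈ S ∧ ∀ u, ¬ T v u}

/-- The leaves (vertices of in-degree zero) of an in-tree `T` on vertex set `S`. -/
def inLeaves (T : V → V → Prop) (S : Set V) : Set V :=
  {v | v ∈ S ∧ ∀ u, ¬ T u v}

/-- The raw data of a rooted cut decomposition: a node set, a parent map,
and an assignment of diblocks to nodes. -/
structure PreDecomp (V : Type*) where
  N : Set V
  parent : V → V
  B : V → Set V

/-- One step up the decomposition tree rooted at `r`. -/
def Step (d : PreDecomp V) (r : V) (a b : V) : Prop :=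
  a ∈ d.N ∧ a ≠ r ∧ d.parent a = b

/-- `x` is an ancestor (not necessarily proper) of `y` in the decomposition tree. -/
def Anc (d : PreDecomp V) (r : V) (x y : V) : Prop :=
  Relation.ReflTransGen (Step d r) y x

/-- `y` is a child of `x` in the decomposition tree. -/
def IsChild (d : PreDecomp V) (r : V) (y x : V) : Prop :=
  y ∈ d.N ∧ y ≠ r ∧ d.parent y = x

/-- `B*_x`: the union of the diblocks over the subtree rooted at `x`. -/
def Bstar (d : PreDecomp V) (r : V) (x : V) : Set V :=
  {v | ∃ y ∈ d.N, Anc d r x y ∧ v ∈ d.B y}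

/-- The partition class `X_y` of a bottleneck `y` of the diblock of `x`
inside `B*_x`: the vertices below `B x` whose access paths from `x`
leave `B x` for the last time at `y`. -/
def PartClass (A : V → V → Prop) (d : PreDecomp V) (r x y : V) : Set V :=
  {v | v ∈ Bstar d r x ∧ v ∉ d.B x ∧
    ∀ p, IsPath (Asub A (Bstar d r x)) p x v → LastTouch (d.B x) p y}

/-- `d` is the `r`-rooted cut decomposition of the digraph `A`:
the tree is well-founded towards the root `r`, the diblocks cover all vertices,
each `B x` is the diblock of `x` in the subdigraph induced on `B*_x`,
the children of `x` are exactly the bottlenecks of `B x`, and the subtree of a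
child `y` spans exactly `{y}` together with the partition class of `y`. -/
structure IsCutDecomp (A : V → V → Prop) (r : V) (d : PreDecomp V) : Prop where
  root_mem : r ∈ d.N
  parent_mem : ∀ x ∈ d.N, x ≠ r → d.parent x ∈ d.N
  tree : ∀ x ∈ d.N, Anc d r r x
  cover : Bstar d r r = Set.univ
  diblock_eq : ∀ x ∈ d.N, d.B x = diblock (Asub A (Bstar d r x)) x
  child_iff : ∀ x ∈ d.N, ∀ y,
    IsChild d r y x ↔ (y ∈ d.B x ∧ y ≠ x ∧ (PartClass A d r x y).Nonempty)
  child_part : ∀ x ∈ d.N, ∀ y, IsChild d r y x →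
    Bstar d r y = insert y (PartClass A d r x y)


section Helpers

open List

variable {A : V → V → Prop}

lemma isPath_singleton (A : V → V → Prop) (x : V) : IsPath A [x] x x :=
  ⟨List.isChain_singleton x, rfl, rfl, List.nodup_singleton x⟩

lemma IsPath.mono {B : V → V → Prop} (h : ∀ u v, A u v → B u v)
    {p : List V} {x v : V} (hp : IsPath A p x v) : IsPath B p x v :=
  ⟨hp.1.imp (fun a b hab => h a b hab), hp.2.1, hp.2.2.1, hp.2.2.2⟩

lemma IsPath.ne_nil {p : List V} {x v : V} (hp : IsPath A p x v) : p ≠ [] := by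
  rintro rfl; exact absurd hp.2.1 (by simp)

lemma IsPath.head_mem {p : List V} {x v : V} (hp : IsPath A p x v) : x ∈ p :=
  List.mem_of_mem_head? (by rw [hp.2.1]; rfl)

lemma IsPath.last_mem {p : List V} {x v : V} (hp : IsPath A p x v) : v ∈ p := by
  obtain ⟨h, rfl⟩ := List.mem_getLast?_eq_getLast (l := p) (by rw [hp.2.2.1]; rfl)
  exact List.getLast_mem h

lemma isPath_prefix {l₁ l₂ : List V} {w x v : V}
    (h : IsPath A (l₁ ++ w :: l₂) x v) : IsPath A (l₁ ++ [w]) x w := by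
  obtain ⟨hc, hh, _, hn⟩ := h
  refine ⟨hc.infix ⟨[], l₂, by simp⟩, ?_, List.getLast?_concat, ?_⟩
  · cases l₁ with
    | nil =>
      have : w = x := by simpa using hh
      subst this; simp
    | cons a t => simpa using hh
  · exact hn.sublist (by simpa using List.sublist_append_left (l₁ ++ [w]) l₂)

lemma isPath_suffix {l₁ l₂ : List V} {w x v : V}
    (h : IsPath A (l₁ ++ w :: l₂) x v) : IsPath A (w :: l₂) w v := by
  obtain ⟨hc, _, hl, hn⟩ := h
  refine ⟨hc.infix ⟨l₁, [], by simp⟩, rfl, ?_, hn.sublist (List.sublist_append_right _ _)⟩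
  · rw [List.getLast?_append_cons] at hl; exact hl

lemma isPath_cons {p : List V} {a x v : V} (hxa : A x a) (hx : x ∉ p)
    (hp : IsPath A p a v) : IsPath A (x :: p) x v := by
  obtain ⟨hc, hh, hl, hn⟩ := hp
  cases p with
  | nil => exact absurd hh (by simp)
  | cons b t =>
    have hb : b = a := by simpa using hh
    subst hb
    exact ⟨List.isChain_cons_cons.2 ⟨hxa, hc⟩, rfl, by rwa [List.getLast?_cons_cons],
      List.nodup_cons.2 ⟨hx, hn⟩⟩

lemma isPath_append {p q : List V} {x m v : V} (hp : IsPath A p x m)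
    (hq : IsPath A q m v) (hd : ∀ w ∈ p.dropLast, w ∉ q) :
    IsPath A (p.dropLast ++ q) x v := by
  obtain ⟨hc, hh, hl, hn⟩ := hp
  have hsplit : p.dropLast ++ [m] = p := List.dropLast_append_getLast? m (by rw [hl]; rfl)
  have hcd : List.Chain' A p.dropLast ∧ ∀ a ∈ p.dropLast.getLast?, A a m := by
    rw [← hsplit] at hc
    have := List.isChain_append.1 hc
    exact ⟨this.1, fun a ha => this.2.2 a ha m rfl⟩
  refine ⟨?_, ?_, ?_, ?_⟩
  · refine List.isChain_append.2 ⟨hcd.1, hq.1, fun a ha b hb => ?_⟩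
    have hb' : b = m := by rw [hq.2.1] at hb; exact (Option.some.inj hb).symm
    subst hb'; exact hcd.2 a ha
  · cases hdl : p.dropLast with
    | nil =>
      have : p = [m] := by rw [← hsplit, hdl]; rfl
      rw [this] at hh
      have : x = m := by simpa using hh.symm
      subst this; simpa using hq.2.1
    | cons a t =>
      have : p.head? = some a := by rw [← hsplit, hdl]; rfl
      rw [hh] at this
      have hxa : x = a := Option.some.inj this
      subst hxa; simp [hdl]
  · rw [List.getLast?_append_of_ne_nil _ hq.ne_nil]; exact hq.2.2.1
  · refine List.nodup_append.2 ⟨hn.sublist (List.dropLast_sublist p), hq.2.2.2, fun a ha b hb hab => hd a ha (hab ▸ hb)⟩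

lemma mem_of_isPath_asub {S : Set V} {p : List V} {x v w : V}
    (h : IsPath (Asub A S) p x v) (hw : w ∈ p) : w = x ∨ w ∈ S := by
  obtain ⟨l₁, l₂, rfl⟩ := List.append_of_mem hw
  cases l₁ with
  | nil =>
    left
    have : w = x := by simpa using h.2.1
    exact this
  | cons a t =>
    right
    have hsp := (List.isChain_append.1 h.1).2.2
    have harc := hsp ((a :: t).getLast (by simp))
      (by rw [List.getLast?_eq_getLast_of_ne_nil]; rfl) w rfl
    exact harc.2.2

lemma chain'_asub_of_mem {S₁ S₂ : Set V} {l : List V}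
    (h : List.Chain' (Asub A S₁) l) (hm : ∀ w ∈ l, w ∈ S₂) :
    List.Chain' (Asub A S₂) l := by
  induction l with
  | nil => exact List.isChain_nil
  | cons a l ih =>
    simp only [List.Chain', List.isChain_cons] at h ⊢
    refine ⟨fun y hy => ?_, ih h.2 (fun w hw => hm w (List.mem_cons_of_mem _ hw))⟩
    have hy' : y ∈ l := List.mem_of_mem_head? hy
    exact ⟨(h.1 y hy).1, hm a (List.mem_cons_self), hm y (List.mem_cons_of_mem _ hy')⟩

lemma lastTouch_unique {B : Set V} {p : List V} {u v : V}
    (hu : LastTouch B p u) (hv : LastTouch B p v) : u = v := by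
  classical
  have key : ∀ z, LastTouch B p z →
      (p.filter (fun a => decide (a ∈ B))).getLast? = some z := by
    rintro z ⟨p₁, p₂, rfl, hzB, hp₂⟩
    have h2 : (z :: p₂).filter (fun a => decide (a ∈ B)) = [z] := by
      rw [List.filter_cons_of_pos (by simpa using hzB)]
      rw [List.filter_eq_nil_iff.2 (fun a ha => by simpa using hp₂ a ha)]
    rw [List.filter_append, h2, List.getLast?_concat]
  exact Option.some.inj ((key u hu).symm.trans (key v hv))

end Helpers


section ArcOf

/-- `u, v` are consecutive elements of the list `l`. -/
def arcOf (l : List V) (u v : V) : Prop := ∃ i : ℕ, l[i]? = some u ∧ l[i+1]? = some v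

lemma arcOf_rel {R : V → V → Prop} {l : List V} {u v : V}
    (hc : List.Chain' R l) (h : arcOf l u v) : R u v := by
  obtain ⟨i, hu, hv⟩ := h
  obtain ⟨h1, rfl⟩ := List.getElem?_eq_some_iff.1 hu
  obtain ⟨h2, rfl⟩ := List.getElem?_eq_some_iff.1 hv
  have := List.isChain_iff_getElem.1 hc i (by omega)
  simpa using this

lemma arcOf_src_mem {l : List V} {u v : V} (h : arcOf l u v) : u ∈ l := by
  obtain ⟨i, hu, _⟩ := h
  obtain ⟨h1, rfl⟩ := List.getElem?_eq_some_iff.1 hu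
  exact List.getElem_mem h1

lemma arcOf_tgt_mem {l : List V} {u v : V} (h : arcOf l u v) : v ∈ l := by
  obtain ⟨i, _, hv⟩ := h
  obtain ⟨h2, rfl⟩ := List.getElem?_eq_some_iff.1 hv
  exact List.getElem_mem h2

lemma arcOf_tgt_ne_head {l : List V} {u v x : V} (hnd : l.Nodup)
    (h : arcOf l u v) (hh : l.head? = some x) : v ≠ x := by
  obtain ⟨i, _, hv⟩ := h
  rw [List.head?_eq_getElem?] at hh
  obtain ⟨h2, rfl⟩ := List.getElem?_eq_some_iff.1 hv
  obtain ⟨h0, hx⟩ := List.getElem?_eq_some_iff.1 hh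
  intro he
  rw [← hx] at he
  have := (hnd.getElem_inj_iff).1 he
  omega

lemma arcOf_src_ne_last {l : List V} {u v m : V} (hnd : l.Nodup)
    (h : arcOf l u v) (hl : l.getLast? = some m) : u ≠ m := by
  obtain ⟨i, hu, hv⟩ := h
  rw [List.getLast?_eq_getElem?] at hl
  obtain ⟨h1, rfl⟩ := List.getElem?_eq_some_iff.1 hu
  obtain ⟨h2, _⟩ := List.getElem?_eq_some_iff.1 hv
  obtain ⟨h3, hm⟩ := List.getElem?_eq_some_iff.1 hl
  intro he
  rw [← hm] at he
  have := (hnd.getElem_inj_iff).1 he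
  omega

lemma arcOf_pred_unique {l : List V} {u u' v : V} (hnd : l.Nodup)
    (h : arcOf l u v) (h' : arcOf l u' v) : u = u' := by
  obtain ⟨i, hu, hv⟩ := h
  obtain ⟨j, hu', hv'⟩ := h'
  obtain ⟨h1, rfl⟩ := List.getElem?_eq_some_iff.1 hu
  obtain ⟨h2, hv2⟩ := List.getElem?_eq_some_iff.1 hv
  obtain ⟨h3, rfl⟩ := List.getElem?_eq_some_iff.1 hu'
  obtain ⟨h4, hv4⟩ := List.getElem?_eq_some_iff.1 hv'
  have heq : l[i+1] = l[j+1] := by rw [hv2, hv4]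
  have hij : i + 1 = j + 1 := (hnd.getElem_inj_iff).1 heq
  have hij' : i = j := by omega
  subst hij'; rfl

lemma chain'_arcOf_take (l : List V) (k : ℕ) : List.Chain' (arcOf l) (l.take k) := by
  simp only [List.Chain']
  rw [List.isChain_iff_getElem]
  intro i hi
  have hlen : (l.take k).length = min k l.length := by simp
  have hmin := min_le_right k l.length
  have h2 : i + 1 < l.length := by omega
  have h1 : i < l.length := by omega
  refine ⟨i, ?_, ?_⟩
  · rw [List.getElem_take, List.getElem?_eq_getElem h1]
  · rw [List.getElem_take, List.getElem?_eq_getElem h2]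

lemma chain'_arcOf_self (l : List V) : List.Chain' (arcOf l) l := by
  simpa using chain'_arcOf_take l l.length

lemma isPath_take {l : List V} {x : V} (hnd : l.Nodup) (hh : l.head? = some x)
    {i : ℕ} (hi : i < l.length) : IsPath (arcOf l) (l.take (i+1)) x l[i] := by
  refine ⟨chain'_arcOf_take l (i+1), ?_, ?_, hnd.sublist (List.take_sublist _ _)⟩
  · cases l with
    | nil => simp at hi
    | cons a t => simpa using hh
  · rw [List.take_succ, List.getElem?_eq_getElem hi, Option.toList_some,
      List.getLast?_concat]

lemma isPath_arcOf_self {l : List V} {x m : V} (hnd : l.Nodup)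
    (hh : l.head? = some x) (hl : l.getLast? = some m) :
    IsPath (arcOf l) l x m :=
  ⟨chain'_arcOf_self l, hh, hl, hnd⟩

end ArcOf

section Tree

lemma mem_of_isPath {T : V → V → Prop} {q : List V} {x v w : V}
    (hq : IsPath T q x v) (hw : w ∈ q) : w = x ∨ ∃ u, T u w := by
  obtain ⟨l₁, l₂, rfl⟩ := List.append_of_mem hw
  cases l₁ with
  | nil =>
    left
    have : w = x := by simpa using hq.2.1
    exact this
  | cons a t =>
    right
    have hsp := (List.isChain_append.1 hq.1).2.2
    exact ⟨(a :: t).getLast (by simp),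
      hsp ((a :: t).getLast (by simp))
        (by rw [List.getLast?_eq_getLast_of_ne_nil]; rfl) w rfl⟩

variable {A₂ T : V → V → Prop} {S : Set V}

lemma IsOutTree.weaken {B : V → V → Prop} {r : V} (h : IsOutTree A₂ T S r)
    (hAB : ∀ u v, A₂ u v → B u v) : IsOutTree B T S r :=
  ⟨fun u v hv => hAB u v (h.sub u v hv), h.mem, h.root_mem, h.no_in_root,
    h.unique_in, h.reach⟩

lemma isOutTree_trivial (A₂ : V → V → Prop) (r : V) :
    IsOutTree A₂ (fun _ _ => False) {r} r := by
  refine ⟨fun u v hv => hv.elim, fun u v hv => hv.elim, rfl, fun u hv => hv,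
    fun v hv hvr => absurd hv hvr, fun v hv => ?_⟩
  rw [Set.mem_singleton_iff] at hv; subst hv
  exact ⟨[v], isPath_singleton _ _⟩

lemma leaves_trivial (r : V) : leaves (fun _ _ => False : V → V → Prop) {r} = {r} := by
  ext v; simp [leaves]

lemma attach_tree {T' : V → V → Prop} {S' : Set V} {m x : V}
    (hT : IsOutTree A₂ T' S' m) {p : List V}
    (hp : IsPath A₂ p x m) (hdisj : ∀ v ∈ p, v ≠ m → v ∉ S') (hxm : x ≠ m) :
    IsOutTree A₂ (fun u v => T' u v ∨ arcOf p u v) (S' ∪ {v | v ∈ p}) x ∧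
    leaves T' S' ⊆ leaves (fun u v => T' u v ∨ arcOf p u v) (S' ∪ {v | v ∈ p}) ∧
    (∃ u, T' x u ∨ arcOf p x u) := by
  obtain ⟨hc, hh, hl, hnd⟩ := hp
  have hp' : IsPath A₂ p x m := ⟨hc, hh, hl, hnd⟩
  have hxp : x ∈ p := hp'.head_mem
  have hmp : m ∈ p := hp'.last_mem
  have hxS : x ∉ S' := hdisj x hxp hxm
  have hlen2 : 2 ≤ p.length := by
    cases p with
    | nil => simp at hh
    | cons a t =>
      cases t with
      | nil =>
        exfalso; apply hxm
        have h1 : a = x := by simpa using hh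
        have h2 : a = m := by simpa using hl
        rw [← h1, h2]
      | cons b t' => simp
  have h0 : p[0]? = some x := by rw [← List.head?_eq_getElem?]; exact hh
  have hnem : ∀ w ∈ p, w ≠ m → w ∉ S' := hdisj
  -- predecessor existence
  have hpred : ∀ v ∈ p, v ≠ x → ∃ u, arcOf p u v := by
    intro v hv hvx
    obtain ⟨j, hj, rfl⟩ := List.mem_iff_getElem.1 hv
    have hj0 : j ≠ 0 := by
      rintro rfl
      apply hvx
      have h' := List.getElem?_eq_getElem hj
      rw [h0] at h'
      exact Option.some.inj h'.symm
    obtain ⟨j', rfl⟩ : ∃ j', j = j' + 1 := ⟨j - 1, by omega⟩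
    exact ⟨p[j'], j', List.getElem?_eq_getElem (by omega), List.getElem?_eq_getElem hj⟩
  -- the spine path in the enlarged relation
  have hspine : IsPath (fun u v => T' u v ∨ arcOf p u v) p x m :=
    (isPath_arcOf_self hnd hh hl).mono (fun u v hv => Or.inr hv)
  refine ⟨⟨?_, ?_, ?_, ?_, ?_, ?_⟩, ?_, ?_⟩
  · -- sub
    rintro u v (h' | h')
    · exact hT.sub u v h'
    · exact arcOf_rel hc h'
  · -- mem
    rintro u v (h' | h')
    · exact ⟨Or.inl (hT.mem u v h').1, Or.inl (hT.mem u v h').2⟩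
    · exact ⟨Or.inr (arcOf_src_mem h'), Or.inr (arcOf_tgt_mem h')⟩
  · -- root_mem
    exact Or.inr hxp
  · -- no_in_root
    rintro u (h' | h')
    · exact hxS (hT.mem u x h').2
    · exact arcOf_tgt_ne_head hnd h' hh rfl
  · -- unique_in
    intro v hv hvx
    by_cases hvS : v ∈ S'
    · by_cases hvm : v = m
      · subst hvm
        obtain ⟨u, hu⟩ := hpred v hmp hvx
        refine ⟨u, Or.inr hu, ?_⟩
        rintro u' (h' | h')
        · exact absurd h' (hT.no_in_root u')
        · exact arcOf_pred_unique hnd h' hu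
      · obtain ⟨u, hu, huu⟩ := hT.unique_in v hvS hvm
        refine ⟨u, Or.inl hu, ?_⟩
        rintro u' (h' | h')
        · exact huu u' h'
        · exact absurd hvS (hnem v (arcOf_tgt_mem h') hvm)
    · have hvp : v ∈ p := by
        rcases hv with h' | h'
        · exact absurd h' hvS
        · exact h'
      obtain ⟨u, hu⟩ := hpred v hvp hvx
      refine ⟨u, Or.inr hu, ?_⟩
      rintro u' (h' | h')
      · exact absurd (hT.mem u' v h').2 hvS
      · exact arcOf_pred_unique hnd h' hu
  · -- reach
    intro v hv
    by_cases hvp : v ∈ p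
    · obtain ⟨j, hj, rfl⟩ := List.mem_iff_getElem.1 hvp
      exact ⟨_, (isPath_take hnd hh hj).mono (fun u v hv => Or.inr hv)⟩
    · have hvS : v ∈ S' := by
        rcases hv with h' | h'
        · exact h'
        · exact absurd h' hvp
      obtain ⟨q, hq⟩ := hT.reach v hvS
      have hqmem : ∀ w ∈ q, w ∈ S' ∨ w = m := by
        intro w hw
        rcases mem_of_isPath hq hw with rfl | ⟨u, hu⟩
        · exact Or.inr rfl
        · exact Or.inl (hT.mem u w hu).2
      refine ⟨p.dropLast ++ q, isPath_append hspine
        (hq.mono (fun u v hv => Or.inl hv)) ?_⟩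
      intro w hw hwq
      have hwp : w ∈ p := List.dropLast_sublist p |>.mem hw
      have hwm : w ≠ m := by
        intro he; subst he
        have : p.dropLast ++ [w] = p := List.dropLast_append_getLast? w (by rw [hl]; rfl)
        have hnd' := this ▸ hnd
        rw [List.nodup_append] at hnd'
        exact hnd'.2.2 w hw w (by simp) rfl
      rcases hqmem w hwq with h' | h'
      · exact hnem w hwp hwm h'
      · exact hwm h'
  · -- leaves mono
    intro v hv
    obtain ⟨hvS, hvout⟩ := hv
    refine ⟨Or.inl hvS, ?_⟩
    rintro u (h' | h')
    · exact hvout u h'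
    · exact hnem v (arcOf_src_mem h') (arcOf_src_ne_last hnd h' hl) hvS
  · -- root out-arc
    refine ⟨p[1], Or.inr ⟨0, h0, List.getElem?_eq_getElem (by omega)⟩⟩

lemma pendant_tree {T' : V → V → Prop} {S' : Set V} {x w : V}
    (hT : IsOutTree A₂ T' S' x) (hw : A₂ x w) (hwS : w ∉ S')
    (hroot : ∃ u, T' x u) :
    IsOutTree A₂ (fun u v => T' u v ∨ (u = x ∧ v = w)) (insert w S') x ∧
    leaves T' S' ⊆ leaves (fun u v => T' u v ∨ (u = x ∧ v = w)) (insert w S') ∧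
    w ∈ leaves (fun u v => T' u v ∨ (u = x ∧ v = w)) (insert w S') := by
  have hwx : w ≠ x := fun he => hwS (he ▸ hT.root_mem)
  refine ⟨⟨?_, ?_, ?_, ?_, ?_, ?_⟩, ?_, ?_⟩
  · rintro u v (h' | ⟨rfl, rfl⟩)
    · exact hT.sub u v h'
    · exact hw
  · rintro u v (h' | ⟨rfl, rfl⟩)
    · exact ⟨Set.mem_insert_of_mem _ (hT.mem u v h').1, Set.mem_insert_of_mem _ (hT.mem u v h').2⟩
    · exact ⟨Set.mem_insert_of_mem _ hT.root_mem, Set.mem_insert _ _⟩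
  · exact Set.mem_insert_of_mem _ hT.root_mem
  · rintro u (h' | ⟨rfl, rfl⟩)
    · exact hT.no_in_root u h'
    · exact hwx rfl
  · intro v hv hvx
    rcases Set.mem_insert_iff.1 hv with rfl | hvS
    · refine ⟨x, Or.inr ⟨rfl, rfl⟩, ?_⟩
      rintro u' (h' | ⟨rfl, _⟩)
      · exact absurd (hT.mem u' v h').2 hwS
      · rfl
    · obtain ⟨u, hu, huu⟩ := hT.unique_in v hvS hvx
      refine ⟨u, Or.inl hu, ?_⟩
      rintro u' (h' | ⟨rfl, rfl⟩)
      · exact huu u' h'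
      · exact absurd hvS hwS
  · intro v hv
    rcases Set.mem_insert_iff.1 hv with rfl | hvS
    · exact ⟨[x, v], ⟨List.isChain_cons_cons.2 ⟨Or.inr ⟨rfl, rfl⟩, List.isChain_singleton v⟩,
        rfl, rfl, by simp [hwx.symm]⟩⟩
    · obtain ⟨q, hq⟩ := hT.reach v hvS
      exact ⟨q, hq.mono (fun u v hv => Or.inl hv)⟩
  · intro v hv
    obtain ⟨hvS, hvout⟩ := hv
    refine ⟨Set.mem_insert_of_mem _ hvS, ?_⟩
    rintro u (h' | ⟨rfl, rfl⟩)
    · exact hvout u h'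
    · obtain ⟨u, hu⟩ := hroot
      exact hvout u hu
  · refine ⟨Set.mem_insert _ _, ?_⟩
    rintro u (h' | ⟨rfl, rfl⟩)
    · exact hwS (hT.mem w u h').1
    · exact hwx rfl

end Tree


section Decomp

variable {A : V → V → Prop} {s : V} {d : PreDecomp V}

lemma mem_B_self (h : IsCutDecomp A s d) {x : V} (hx : x ∈ d.N) : x ∈ d.B x := by
  rw [h.diblock_eq x hx]
  exact Or.inl (Or.inr rfl)

lemma mem_bstar_of_mem_B {x v : V} (hx : x ∈ d.N) (hv : v ∈ d.B x) :
    v ∈ Bstar d s x :=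
  ⟨x, hx, Relation.ReflTransGen.refl, hv⟩

lemma bstar_child_subset {x y : V} (hc : IsChild d s y x) :
    Bstar d s y ⊆ Bstar d s x := by
  rintro v ⟨z, hz, hanc, hvB⟩
  exact ⟨z, hz, hanc.tail hc, hvB⟩

lemma belowPart (h : IsCutDecomp A s d) {x w : V} (hx : x ∈ d.N)
    (hw : w ∈ Bstar d s x) (hwB : w ∉ d.B x) :
    ∃ c, IsChild d s c x ∧ w ∈ PartClass A d s x c := by
  obtain ⟨z, hz, hanc, hwz⟩ := hw
  rcases Relation.ReflTransGen.cases_tail hanc with he | ⟨c, hzc, hstep⟩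
  · rw [← he] at hwz; exact absurd hwz hwB
  · have hcx : IsChild d s c x := hstep
    have hwc : w ∈ Bstar d s c := ⟨z, hz, hzc, hwz⟩
    rw [h.child_part x hx c hcx] at hwc
    rcases Set.mem_insert_iff.1 hwc with rfl | hwP
    · exact absurd ((h.child_iff x hx w).1 hcx).1 hwB
    · exact ⟨c, hcx, hwP⟩

lemma path_avoids_child (h : IsCutDecomp A s d) {x x' : V} (hx : x ∈ d.N)
    (hc : IsChild d s x' x) {r : List V}
    (hr : IsPath (Asub A (Bstar d s x)) r x x') :
    ∀ w ∈ r, w ≠ x' → w ∉ Bstar d s x' := by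
  intro w hw hwx' hwB
  rw [h.child_part x hx x' hc] at hwB
  rcases Set.mem_insert_iff.1 hwB with rfl | hwP
  · exact hwx' rfl
  obtain ⟨l₁, l₂, rfl⟩ := List.append_of_mem hw
  have hpre : IsPath (Asub A (Bstar d s x)) (l₁ ++ [w]) x w := isPath_prefix hr
  obtain ⟨q₁, q₂, hq, hx'B, -⟩ := hwP.2.2 _ hpre
  have hx'mem : x' ∈ l₁ ++ [w] := by rw [hq]; simp
  rcases List.mem_append.1 hx'mem with h1 | h1
  · have hx'tail : x' ∈ w :: l₂ := by
      have hgl := hr.2.2.1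
      rw [List.getLast?_append_cons] at hgl
      obtain ⟨h', he⟩ := List.mem_getLast?_eq_getLast (l := w :: l₂) (by rw [hgl]; rfl)
      rw [he]; exact List.getLast_mem h'
    have hnd := hr.2.2.2
    rw [List.nodup_append] at hnd
    exact hnd.2.2 x' h1 x' hx'tail rfl
  · simp at h1
    exact hwx' h1.symm

lemma mem_B_not_bstar_child (h : IsCutDecomp A s d) {x x' z : V} (hx : x ∈ d.N)
    (hc : IsChild d s x' x) (hz : z ∈ d.B x) (hzx' : z ≠ x') :
    z ∉ Bstar d s x' := by
  intro hmem
  rw [h.child_part x hx x' hc] at hmem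
  rcases Set.mem_insert_iff.1 hmem with rfl | hP
  · exact hzx' rfl
  · exact hP.2.1 hz

lemma reach_child (h : IsCutDecomp A s d) {x x' : V} (hx : x ∈ d.N)
    (hc : IsChild d s x' x)
    (hr : ∀ v ∈ Bstar d s x, Reaches (Asub A (Bstar d s x)) x v) :
    ∀ v ∈ Bstar d s x', Reaches (Asub A (Bstar d s x')) x' v := by
  intro v hv
  have hx'B : x' ∈ Bstar d s x' := mem_bstar_of_mem_B hc.1 (mem_B_self h hc.1)
  rw [h.child_part x hx x' hc] at hv
  rcases Set.mem_insert_iff.1 hv with rfl | hv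
  · exact ⟨[v], isPath_singleton _ _⟩
  obtain ⟨hvBs, hvB, hall⟩ := hv
  obtain ⟨p, hp⟩ := hr v hvBs
  obtain ⟨p₁, p₂, rfl, hx'Bx, hp₂⟩ := hall p hp
  have hq : IsPath (Asub A (Bstar d s x)) (x' :: p₂) x' v := isPath_suffix hp
  have hndq : (x' :: p₂).Nodup := hq.2.2.2
  have hmem : ∀ w ∈ x' :: p₂, w ∈ Bstar d s x' := by
    intro w hw
    rcases List.mem_cons.1 hw with rfl | hw₂
    · exact hx'B
    have hwx' : w ≠ x' := by
      rintro rfl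
      exact (List.nodup_cons.1 hndq).1 hw₂
    have hwBs : w ∈ Bstar d s x := by
      rcases mem_of_isPath_asub hq hw with h' | h'
      · exact absurd h' hwx'
      · exact h'
    have hwB : w ∉ d.B x := hp₂ w hw₂
    obtain ⟨c, hcx, hwc⟩ := belowPart h hx hwBs hwB
    obtain ⟨l₃, l₄, hsplit⟩ := List.append_of_mem hw₂
    have hshape : p₁ ++ x' :: p₂ = (p₁ ++ x' :: l₃) ++ w :: l₄ := by
      rw [hsplit]; simp
    have hpre : IsPath (Asub A (Bstar d s x)) ((p₁ ++ x' :: l₃) ++ [w]) x w :=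
      isPath_prefix (by rw [← hshape]; exact hp)
    have hlt2 := hwc.2.2 _ hpre
    have hlt1 : LastTouch (d.B x) ((p₁ ++ x' :: l₃) ++ [w]) x' := by
      refine ⟨p₁, l₃ ++ [w], by simp, hx'Bx, ?_⟩
      intro y hy
      rcases List.mem_append.1 hy with h' | h'
      · exact hp₂ y (by rw [hsplit]; exact List.mem_append.2 (Or.inl h'))
      · simp at h'
        subst h'
        exact hp₂ y (by rw [hsplit]; exact List.mem_append.2 (Or.inr (List.mem_cons_self)))
    have hcx' : c = x' := lastTouch_unique hlt2 hlt1
    subst hcx'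
    rw [h.child_part x hx c hc]
    exact Set.mem_insert_of_mem _ hwc
  exact ⟨x' :: p₂, chain'_asub_of_mem hq.1 hmem, rfl, hq.2.2.1, hndq⟩

lemma eq_nil_of_nodup_getLast {x z : V} {t : List V} (hnd : (x :: z :: t).Nodup)
    (hl : (x :: z :: t).getLast? = some z) : t = [] := by
  cases t with
  | nil => rfl
  | cons c t' =>
    exfalso
    rw [List.getLast?_cons_cons, List.getLast?_cons_cons] at hl
    have hzm : z ∈ c :: t' := by
      obtain ⟨h', he⟩ := List.mem_getLast?_eq_getLast (l := c :: t') (by rw [hl]; rfl)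
      rw [he]; exact List.getLast_mem h'
    exact (List.nodup_cons.1 (List.nodup_cons.1 hnd).2).1 hzm

lemma isPath_two {A' : V → V → Prop} {p : List V} {x z : V}
    (hp : IsPath A' p x z) (hxz : x ≠ z) :
    ∃ a t, p = x :: a :: t ∧ A' x a ∧ a ≠ x := by
  cases p with
  | nil => exact absurd hp.2.1 (by simp)
  | cons u t =>
    have hux : u = x := by simpa using hp.2.1
    subst hux
    cases t with
    | nil =>
      exfalso; apply hxz
      have : u = z := by simpa using hp.2.2.1
      exact this
    | cons a t' =>
      refine ⟨a, t', rfl, (List.isChain_cons_cons.1 hp.1).1, ?_⟩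
      intro he
      subst he
      exact (List.nodup_cons.1 hp.2.2.2).1 (List.mem_cons_self)

lemma bireach_two {A' : V → V → Prop} {x z : V} (hz : BiReachable A' x z)
    (hzx : z ≠ x) : ∃ a b, a ≠ b ∧ a ≠ x ∧ b ≠ x ∧ A' x a ∧ A' x b := by
  obtain ⟨p, q, hpq, hp, hq, hdisj⟩ := hz
  obtain ⟨a, tp, rfl, hAa, hax⟩ := isPath_two hp (Ne.symm hzx)
  obtain ⟨b, tq, rfl, hAb, hbx⟩ := isPath_two hq (Ne.symm hzx)
  by_cases hab : a = b
  · exfalso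
    subst hab
    have haz : a = z := by
      rcases hdisj a (by simp) (by simp) with h' | h'
      · exact absurd h' hax
      · exact h'
    subst haz
    have htp : tp = [] := eq_nil_of_nodup_getLast hp.2.2.2 hp.2.2.1
    have htq : tq = [] := eq_nil_of_nodup_getLast hq.2.2.2 hq.2.2.1
    rw [htp, htq] at hpq
    exact hpq rfl
  · exact ⟨a, b, hab, hax, hbx, hAa, hAb⟩

lemma two_outnbrs [Finite V] (h : IsCutDecomp A s d) {x : V} (hx : x ∈ d.N)
    (h3 : 3 ≤ (d.B x).ncard) :
    ∃ a b, a ≠ b ∧ a ≠ x ∧ b ≠ x ∧ Asub A (Bstar d s x) x a ∧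
      Asub A (Bstar d s x) x b ∧ a ∈ d.B x ∧ b ∈ d.B x := by
  have hB := h.diblock_eq x hx
  have hxB : x ∈ d.B x := mem_B_self h hx
  have hout_mem : ∀ {c : V}, Asub A (Bstar d s x) x c → c ∈ d.B x := by
    intro c hc
    rw [hB]; exact Or.inr hc
  have h2 : 1 < (d.B x \ {x}).ncard := by
    have := Set.ncard_diff_singleton_add_one hxB (Set.toFinite _)
    omega
  obtain ⟨u, v, hu, hv, huv⟩ := (Set.one_lt_ncard_iff (Set.toFinite _)).1 h2
  have hux : u ≠ x := by simpa using hu.2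
  have hvx : v ≠ x := by simpa using hv.2
  have key : ∀ z, z ∈ d.B x → z ≠ x →
      (Asub A (Bstar d s x) x z ∨
        ∃ a b, a ≠ b ∧ a ≠ x ∧ b ≠ x ∧ Asub A (Bstar d s x) x a ∧
          Asub A (Bstar d s x) x b) := by
    intro z hzB hzx
    rw [hB] at hzB
    rcases hzB with (hbi | hr) | hout0
    · exact Or.inr (bireach_two hbi hzx)
    · exact absurd hr hzx
    · exact Or.inl hout0
  rcases key u hu.1 hux with h1 | ⟨a, b, hab, hax, hbx, hAa, hAb⟩
  · rcases key v hv.1 hvx with h2' | ⟨a, b, hab, hax, hbx, hAa, hAb⟩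
    · exact ⟨u, v, huv, hux, hvx, h1, h2', hu.1, hv.1⟩
    · exact ⟨a, b, hab, hax, hbx, hAa, hAb, hout_mem hAa, hout_mem hAb⟩
  · exact ⟨a, b, hab, hax, hbx, hAa, hAb, hout_mem hAa, hout_mem hAb⟩

end Decomp


lemma main_ind [Finite V] {A : V → V → Prop} {s : V} {d : PreDecomp V}
    (h : IsCutDecomp A s d) :
    ∀ (q : List V) (x : V), q.Chain' (fun a b => IsChild d s b a) →
      q.head? = some x → x ∈ d.N →
      (∀ v ∈ Bstar d s x, Reaches (Asub A (Bstar d s x)) x v) →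
      ∃ T S, IsOutTree (Asub A (Bstar d s x)) T S x ∧ S ⊆ Bstar d s x ∧
        {z | z ∈ q ∧ 3 ≤ (d.B z).ncard}.ncard ≤ (leaves T S).ncard := by
  intro q
  induction q with
  | nil => intro x _ hh; exact absurd hh (by simp)
  | cons a tl ih =>
    intro x hch hh hxN hrx
    have hax0 : a = x := by simpa using hh
    subst hax0
    cases tl with
    | nil =>
      refine ⟨fun _ _ => False, {a}, isOutTree_trivial _ _, ?_, ?_⟩
      · intro z hz
        rw [Set.mem_singleton_iff] at hz; subst hz
        exact mem_bstar_of_mem_B hxN (mem_B_self h hxN)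
      · rw [leaves_trivial]
        have hsub : {z | z ∈ [a] ∧ 3 ≤ (d.B z).ncard} ⊆ {a} := by
          rintro z ⟨hz, -⟩
          simpa using hz
        simpa using Set.ncard_le_ncard hsub (Set.toFinite _)
    | cons x' rest =>
      have hc : IsChild d s x' a := (List.isChain_cons_cons.1 hch).1
      have hch' := (List.isChain_cons_cons.1 hch).2
      have hx'N : x' ∈ d.N := hc.1
      have hx'Ba : x' ∈ d.B a := ((h.child_iff a hxN x').1 hc).1
      have hx'a : x' ≠ a := ((h.child_iff a hxN x').1 hc).2.1
      have hr' := reach_child h hxN hc hrx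
      obtain ⟨T', S', hT', hS', hcount'⟩ := ih x' hch' rfl hx'N hr'
      have hT'w : IsOutTree (Asub A (Bstar d s a)) T' S' x' :=
        hT'.weaken (fun u v hv =>
          ⟨hv.1, bstar_child_subset hc hv.2.1, bstar_child_subset hc hv.2.2⟩)
      have hx'Bs : x' ∈ Bstar d s a := mem_bstar_of_mem_B hxN hx'Ba
      obtain ⟨p₀, hp₀⟩ := hrx x' hx'Bs
      have haBsa : a ∈ Bstar d s a := mem_bstar_of_mem_B hxN (mem_B_self h hxN)
      by_cases hdeg : 3 ≤ (d.B a).ncard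
      · -- non-degenerate: spine plus pendant
        obtain ⟨aa, bb, hab, haxx, hbxx, hAa, hAb, haB, hbB⟩ := two_outnbrs h hxN hdeg
        obtain ⟨r, w, hrp, hwarc, hwr, hwx', hwBs'⟩ :
            ∃ r w, IsPath (Asub A (Bstar d s a)) r a x' ∧
              Asub A (Bstar d s a) a w ∧ w ∉ r ∧ w ≠ x' ∧ w ∉ Bstar d s x' := by
          have hpath2 : ∀ c : V, Asub A (Bstar d s a) a c → c = x' →
              IsPath (Asub A (Bstar d s a)) [a, x'] a x' := by
            rintro c hc' rfl
            exact ⟨List.isChain_cons_cons.2 ⟨hc', List.isChain_singleton _⟩, rfl, rfl,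
              by simpa using Ne.symm hx'a⟩
          by_cases hax' : aa = x'
          · refine ⟨[a, x'], bb, hpath2 aa hAa hax', hAb, ?_, ?_, ?_⟩
            · intro hmem
              rcases List.mem_cons.1 hmem with he | hmem
              · exact hbxx he
              · simp at hmem
                exact hab (hax'.trans hmem.symm)
            · intro he; exact hab (hax'.trans he.symm)
            · exact mem_B_not_bstar_child h hxN hc hbB
                (fun he => hab (hax'.trans he.symm))
          by_cases hbx' : bb = x'
          · refine ⟨[a, x'], aa, hpath2 bb hAb hbx', hAa, ?_, ?_, ?_⟩
            · intro hmem
              rcases List.mem_cons.1 hmem with he | hmem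
              · exact haxx he
              · simp at hmem
                exact hax' hmem
            · exact hax'
            · exact mem_B_not_bstar_child h hxN hc haB hax'
          have haBs' : aa ∉ Bstar d s x' := mem_B_not_bstar_child h hxN hc haB hax'
          have hbBs' : bb ∉ Bstar d s x' := mem_B_not_bstar_child h hxN hc hbB hbx'
          by_cases hap : aa ∈ p₀
          · obtain ⟨l₁, l₂, hp0eq⟩ := List.append_of_mem hap
            have hp₁ := hp₀
            rw [hp0eq] at hp₁
            have hsfx : IsPath (Asub A (Bstar d s a)) (aa :: l₂) aa x' :=
              isPath_suffix hp₁
            have hanotin : a ∉ aa :: l₂ := by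
              cases l₁ with
              | nil =>
                exfalso
                have : aa = a := by simpa using hp₁.2.1
                exact haxx this
              | cons c l₁' =>
                have hca : c = a := by simpa using hp₁.2.1
                subst hca
                have hnd := hp₁.2.2.2
                rw [List.cons_append, List.nodup_cons] at hnd
                intro hmem
                exact hnd.1 (List.mem_append.2 (Or.inr hmem))
            have hshort : IsPath (Asub A (Bstar d s a)) (a :: aa :: l₂) a x' :=
              isPath_cons hAa hanotin hsfx
            by_cases hbp : bb ∈ a :: aa :: l₂
            · have hbl₂ : bb ∈ l₂ := by
                rcases List.mem_cons.1 hbp with he | hbp'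
                · exact absurd he hbxx
                rcases List.mem_cons.1 hbp' with he | hbp''
                · exact absurd he.symm hab
                · exact hbp''
              obtain ⟨l₃, l₄, hl₂eq⟩ := List.append_of_mem hbl₂
              have hsfx2 : IsPath (Asub A (Bstar d s a)) (bb :: l₄) bb x' := by
                refine isPath_suffix (x := a) (l₁ := l₁ ++ aa :: l₃) ?_
                have : l₁ ++ aa :: l₂ = (l₁ ++ aa :: l₃) ++ bb :: l₄ := by
                  rw [hl₂eq]; simp
                rw [← this]; exact hp₁
              have hanotin2 : a ∉ bb :: l₄ := by
                intro hmem
                apply hanotin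
                rcases List.mem_cons.1 hmem with he | hmem'
                · rw [he, hl₂eq]
                  exact List.mem_cons_of_mem _ (List.mem_append.2 (Or.inr (List.mem_cons_self)))
                · rw [hl₂eq]
                  exact List.mem_cons_of_mem _ (List.mem_append.2 (Or.inr (List.mem_cons_of_mem _ hmem')))
              have hshort2 : IsPath (Asub A (Bstar d s a)) (a :: bb :: l₄) a x' :=
                isPath_cons hAb hanotin2 hsfx2
              refine ⟨a :: bb :: l₄, aa, hshort2, hAa, ?_, hax', haBs'⟩
              intro hmem
              rcases List.mem_cons.1 hmem with he | hmem'
              · exact haxx he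
              rcases List.mem_cons.1 hmem' with he | hmem''
              · exact hab he
              · have : aa ∉ l₂ := (List.nodup_cons.1 hsfx.2.2.2).1
                apply this
                rw [hl₂eq]
                exact List.mem_append.2 (Or.inr (List.mem_cons_of_mem _ hmem''))
            · exact ⟨a :: aa :: l₂, bb, hshort, hAb, hbp, hbx', hbBs'⟩
          · exact ⟨p₀, aa, hp₀, hAa, hap, hax', haBs'⟩
        have hdisj : ∀ v ∈ r, v ≠ x' → v ∉ S' := fun v hv hvx' hvS =>
          (path_avoids_child h hxN hc hrp v hv hvx') (hS' hvS)
        obtain ⟨hTn, hleaf, hrout⟩ := attach_tree hT'w hrp hdisj (Ne.symm hx'a)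
        have hwSn : w ∉ S' ∪ {v | v ∈ r} := by
          rintro (h' | h')
          · exact hwBs' (hS' h')
          · exact hwr h'
        obtain ⟨hTf, hleaf2, hwleaf⟩ := pendant_tree hTn hwarc hwSn hrout
        refine ⟨_, _, hTf, ?_, ?_⟩
        · rintro z hz
          rcases Set.mem_insert_iff.1 hz with rfl | hz
          · exact hwarc.2.2
          rcases hz with hz | hz
          · exact bstar_child_subset hc (hS' hz)
          · rcases mem_of_isPath_asub hrp hz with rfl | h'
            · exact haBsa
            · exact h'
        · have hsub : {z | z ∈ a :: x' :: rest ∧ 3 ≤ (d.B z).ncard} ⊆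
              insert a {z | z ∈ x' :: rest ∧ 3 ≤ (d.B z).ncard} := by
            rintro z ⟨hz1, hz2⟩
            rcases List.mem_cons.1 hz1 with rfl | hz1
            · exact Set.mem_insert _ _
            · exact Set.mem_insert_of_mem _ ⟨hz1, hz2⟩
          have h1 : {z | z ∈ a :: x' :: rest ∧ 3 ≤ (d.B z).ncard}.ncard ≤
              {z | z ∈ x' :: rest ∧ 3 ≤ (d.B z).ncard}.ncard + 1 :=
            le_trans (Set.ncard_le_ncard hsub (Set.toFinite _)) (Set.ncard_insert_le _ _)
          have hwnl : w ∉ leaves T' S' := fun h' => hwBs' (hS' h'.1)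
          have h2 : insert w (leaves T' S') ⊆
              leaves (fun u v => (T' u v ∨ arcOf r u v) ∨ u = a ∧ v = w)
                (insert w (S' ∪ {v | v ∈ r})) := by
            rintro z hz
            rcases Set.mem_insert_iff.1 hz with rfl | hz
            · exact hwleaf
            · exact hleaf2 (hleaf hz)
          have h3 := Set.ncard_le_ncard h2 (Set.toFinite _)
          rw [Set.ncard_insert_of_notMem hwnl (Set.toFinite _)] at h3
          omega
      · -- degenerate
        have hdisj : ∀ v ∈ p₀, v ≠ x' → v ∉ S' := fun v hv hvx' hvS =>
          (path_avoids_child h hxN hc hp₀ v hv hvx') (hS' hvS)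
        obtain ⟨hTn, hleaf, -⟩ := attach_tree hT'w hp₀ hdisj (Ne.symm hx'a)
        refine ⟨_, _, hTn, ?_, ?_⟩
        · rintro z (hz | hz)
          · exact bstar_child_subset hc (hS' hz)
          · rcases mem_of_isPath_asub hp₀ hz with rfl | h'
            · exact haBsa
            · exact h'
        · have hsub : {z | z ∈ a :: x' :: rest ∧ 3 ≤ (d.B z).ncard} ⊆
              {z | z ∈ x' :: rest ∧ 3 ≤ (d.B z).ncard} := by
            rintro z ⟨hz1, hz2⟩
            rcases List.mem_cons.1 hz1 with rfl | hz1
            · exact absurd hz2 hdeg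
            · exact ⟨hz1, hz2⟩
          calc {z | z ∈ a :: x' :: rest ∧ 3 ≤ (d.B z).ncard}.ncard
              ≤ {z | z ∈ x' :: rest ∧ 3 ≤ (d.B z).ncard}.ncard :=
                Set.ncard_le_ncard hsub (Set.toFinite _)
            _ ≤ (leaves T' S').ncard := hcount'
            _ ≤ _ := Set.ncard_le_ncard hleaf (Set.toFinite _)


/-- if some root-to-node path of the decomposition tree contains
at least `ℓ` nodes with non-degenerate diblocks (diblocks with at least three
vertices), then there is an out-tree rooted at `s` with at least `ℓ` leaves. -/
theorem cutDecomp_nondegenerate_leaves {V : Type*} [Fintype V]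
    (A : V → V → Prop) (s : V) (hreach : ∀ v, Reaches A s v)
    (d : PreDecomp V) (h : IsCutDecomp A s d)
    (y : V) (hy : y ∈ d.N) (ℓ : ℕ)
    (q : List V) (hq : List.Chain' (fun a b => IsChild d s b a) q)
    (hqh : q.head? = some s) (hql : q.getLast? = some y)
    (hcount : ℓ ≤ {x | x ∈ q ∧ 3 ≤ (d.B x).ncard}.ncard) :
    ∃ (T : V → V → Prop) (S : Set V),
      IsOutTree A T S s ∧ ℓ ≤ (leaves T S).ncard := by
  have hs : ∀ v ∈ Bstar d s s, Reaches (Asub A (Bstar d s s)) s v := by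
    intro v _
    obtain ⟨p, hp⟩ := hreach v
    exact ⟨p, hp.mono (fun u v huv =>
      ⟨huv, by rw [h.cover]; trivial, by rw [h.cover]; trivial⟩)⟩
  obtain ⟨T, S, hT, -, hcount'⟩ := main_ind h q s hq hqh h.root_mem hs
  exact ⟨T, S, hT.weaken (fun u v hv => hv.1), le_trans hcount hcount'⟩

end CutPaper
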